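/- Fix ε > 0 and α > 0. For every x > 0 and y ∈ ℝ: (i) the function t ↦ φ(x, t) has derivative ε·erfi(y/√(4·α·x)) at t = y; (ii) the function t ↦ ε·erfi(t/√(4·α·x)) has derivative (ε/(2·√(α·x)))·exp(y²/(4·α·x)) at t = y; (iii) the function s ↦ φ(s, y) has derivative −(ε·√α/(2·√x))·exp(y²/(4·α·x)) at s = x. Consequently ∂₁φ(x, y) + α·∂₂₂φ(x, y) = 0, i.e., φ satisfies the generalized Backward Heat Equation with diffusivity constant α. -/

import Mathlib

/-- The imaginary error function, `erfi x = ∫ u in 0..x, exp (u²)`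
(the conventional erfi scaled by `√π / 2`). -/
noncomputable def erfi (x : ℝ) : ℝ := ∫ u in (0:ℝ)..x, Real.exp (u ^ 2)

lemma hasDerivAt_erfi (u : ℝ) : HasDerivAt erfi (Real.exp (u ^ 2)) u := by
  have hc : Continuous fun t : ℝ => Real.exp (t ^ 2) := by continuity
  exact intervalIntegral.integral_hasDerivAt_right (hc.intervalIntegrable _ _)
    (hc.stronglyMeasurable.stronglyMeasurableAtFilter) hc.continuousAt

lemma continuous_erfi : Continuous erfi :=
  continuous_iff_continuousAt.2 fun u => (hasDerivAt_erfi u).continuousAt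

lemma hasDerivAt_G (z : ℝ) :
    HasDerivAt (fun w => ∫ u in (0:ℝ)..w, erfi u) (erfi z) z :=
  intervalIntegral.integral_hasDerivAt_right (continuous_erfi.intervalIntegrable _ _)
    (continuous_erfi.stronglyMeasurable.stronglyMeasurableAtFilter) continuous_erfi.continuousAt

lemma integral_erfi (w : ℝ) :
    ∫ u in (0:ℝ)..w, erfi u = w * erfi w - (Real.exp (w ^ 2) - 1) / 2 := by
  have h : ∀ u ∈ Set.uIcc (0:ℝ) w,
      HasDerivAt (fun v => v * erfi v - (Real.exp (v ^ 2) - 1) / 2) (erfi u) u := by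
    intro u _
    have h1 := (hasDerivAt_id u).mul (hasDerivAt_erfi u)
    have h2 : HasDerivAt (fun v : ℝ => (Real.exp (v ^ 2) - 1) / 2) (u * Real.exp (u ^ 2)) u := by
      have := ((Real.hasDerivAt_exp (u ^ 2)).comp u
        ((hasDerivAt_pow 2 u))).sub_const (1:ℝ) |>.div_const 2
      refine this.congr_deriv (Eq.symm ?_)
      ring
    refine (h1.sub h2).congr_deriv (Eq.symm ?_)
    simp

  have := intervalIntegral.integral_eq_sub_of_hasDerivAt h
    (continuous_erfi.intervalIntegrable _ _)
  rw [this]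
  simp [erfi]

/-- The potential function `φ(x, y) = ε·√(α·x)·(2·∫₀^{y/√(4αx)} erfi(u) du − 1)`. -/
noncomputable def phi (ε α x y : ℝ) : ℝ :=
  ε * Real.sqrt (α * x) *
    (2 * (∫ u in (0:ℝ)..(y / Real.sqrt (4 * α * x)), erfi u) - 1)


lemma sqrt4mul (α x : ℝ) (hα : 0 < α) (hx : 0 < x) :
    Real.sqrt (4 * α * x) = 2 * Real.sqrt (α * x) := by
  rw [mul_assoc, Real.sqrt_mul (by norm_num), show Real.sqrt 4 = 2 by
    rw [show (4:ℝ) = 2 ^ 2 by norm_num, Real.sqrt_sq (by norm_num)]]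

lemma phi_eq (ε α x y : ℝ) (hα : 0 < α) (hx : 0 < x) :
    phi ε α x y = ε * (y * erfi (y / Real.sqrt (4 * α * x))
      - Real.sqrt (α * x) * Real.exp (y ^ 2 / (4 * α * x))) := by
  have hax : 0 < α * x := mul_pos hα hx
  have h4 : 0 < 4 * α * x := by positivity
  have hs : Real.sqrt (4 * α * x) = 2 * Real.sqrt (α * x) := sqrt4mul α x hα hx
  have hsq : Real.sqrt (α * x) ^ 2 = α * x := Real.sq_sqrt hax.le
  have hspos : 0 < Real.sqrt (α * x) := Real.sqrt_pos.2 hax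
  have hw : (y / Real.sqrt (4 * α * x)) ^ 2 = y ^ 2 / (4 * α * x) := by
    rw [div_pow, Real.sq_sqrt h4.le]
  rw [phi, integral_erfi, hw, hs]
  field_simp
  ring_nf

theorem phi_derivs_and_BHE (ε α : ℝ) (hε : 0 < ε) (hα : 0 < α)
    (x y : ℝ) (hx : 0 < x) :
    -- (i) ∂₂φ(x, y) = ε·erfi(y/√(4αx))
    HasDerivAt (fun t => phi ε α x t) (ε * erfi (y / Real.sqrt (4 * α * x))) y ∧
    -- (ii) ∂₂₂φ(x, y) = (ε/(2√(αx)))·exp(y²/(4αx))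
    HasDerivAt (fun t => ε * erfi (t / Real.sqrt (4 * α * x)))
      (ε / (2 * Real.sqrt (α * x)) * Real.exp (y ^ 2 / (4 * α * x))) y ∧
    -- (iii) ∂₁φ(x, y) = −(ε√α/(2√x))·exp(y²/(4αx))
    HasDerivAt (fun s => phi ε α s y)
      (-(ε * Real.sqrt α / (2 * Real.sqrt x)) * Real.exp (y ^ 2 / (4 * α * x))) x ∧
    -- consequently, ∂₁φ(x, y) + α·∂₂₂φ(x, y) = 0 (the generalized Backward Heat Equation)
    -(ε * Real.sqrt α / (2 * Real.sqrt x)) * Real.exp (y ^ 2 / (4 * α * x))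
      + α * (ε / (2 * Real.sqrt (α * x)) * Real.exp (y ^ 2 / (4 * α * x))) = 0 := by
  have hax : 0 < α * x := mul_pos hα hx
  have h4 : 0 < 4 * α * x := by positivity
  have hspos : 0 < Real.sqrt (α * x) := Real.sqrt_pos.2 hax
  have hcpos : 0 < Real.sqrt (4 * α * x) := Real.sqrt_pos.2 h4
  have hc : Real.sqrt (4 * α * x) ≠ 0 := hcpos.ne'
  have hs : Real.sqrt (4 * α * x) = 2 * Real.sqrt (α * x) := sqrt4mul α x hα hx
  have hw : (y / Real.sqrt (4 * α * x)) ^ 2 = y ^ 2 / (4 * α * x) := by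
    rw [div_pow, Real.sq_sqrt h4.le]
  set c := Real.sqrt (4 * α * x) with hcdef
  -- (i)
  have hi : HasDerivAt (fun t => phi ε α x t) (ε * erfi (y / c)) y := by
    have hz : HasDerivAt (fun t : ℝ => t / c) (1 / c) y := by
      simpa using (hasDerivAt_id y).div_const c
    have h2 := ((((hasDerivAt_G (y / c)).comp y hz).const_mul (2:ℝ)).sub_const 1).const_mul
      (ε * Real.sqrt (α * x))
    have hfun : (fun t => phi ε α x t)
        = fun t => ε * Real.sqrt (α * x) * (2 * (∫ u in (0:ℝ)..(t / c), erfi u) - 1) := by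
      funext t
      rw [phi, ← hcdef]
    rw [hfun]
    refine h2.congr_deriv (Eq.symm ?_)
    rw [hs]
    field_simp
  -- (ii)
  have hii : HasDerivAt (fun t => ε * erfi (t / c))
      (ε / (2 * Real.sqrt (α * x)) * Real.exp (y ^ 2 / (4 * α * x))) y := by
    have hz : HasDerivAt (fun t : ℝ => t / c) (1 / c) y := by
      simpa using (hasDerivAt_id y).div_const c
    have h1 := ((hasDerivAt_erfi (y / c)).comp y hz).const_mul ε
    refine h1.congr_deriv (Eq.symm ?_)
    rw [hw, hs]
    field_simp
  -- (iii)
  have hiii : HasDerivAt (fun s => phi ε α s y)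
      (-(ε * Real.sqrt α / (2 * Real.sqrt x)) * Real.exp (y ^ 2 / (4 * α * x))) x := by
    set a := Real.sqrt α with hadef
    set b := Real.sqrt x with hbdef
    have ha2 : a ^ 2 = α := Real.sq_sqrt hα.le
    have hb2 : b ^ 2 = x := Real.sq_sqrt hx.le
    have hapos : 0 < a := Real.sqrt_pos.2 hα
    have hbpos : 0 < b := Real.sqrt_pos.2 hx
    -- derivative of s ↦ √(4αs)
    have hw1 : HasDerivAt (fun s : ℝ => Real.sqrt (4 * α * s))
        (1 / (2 * Real.sqrt (4 * α * x)) * (4 * α)) x := by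
      have hi2 : HasDerivAt (fun s : ℝ => 4 * α * s) (4 * α) x := by
        simpa using (hasDerivAt_id x).const_mul (4 * α)
      exact (Real.hasDerivAt_sqrt h4.ne').comp x hi2
    -- derivative of s ↦ y / √(4αs)
    have hz1 : HasDerivAt (fun s : ℝ => y / Real.sqrt (4 * α * s))
        (y * -(1 / (2 * c) * (4 * α) / c ^ 2)) x := by
      have := (hw1.inv hc).const_mul y
      simpa [div_eq_mul_inv] using this
    -- derivative of s ↦ erfi (y / √(4αs))
    have he1 : HasDerivAt (fun s : ℝ => erfi (y / Real.sqrt (4 * α * s)))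
        (Real.exp (y ^ 2 / (4 * α * x)) * (y * -(1 / (2 * c) * (4 * α) / c ^ 2))) x := by
      have := (hasDerivAt_erfi (y / c)).comp x hz1
      rwa [hw] at this
    -- derivative of s ↦ √(αs)
    have hu : HasDerivAt (fun s : ℝ => Real.sqrt (α * s))
        (1 / (2 * Real.sqrt (α * x)) * α) x := by
      have hi2 : HasDerivAt (fun s : ℝ => α * s) α x := by
        simpa using (hasDerivAt_id x).const_mul α
      exact (Real.hasDerivAt_sqrt hax.ne').comp x hi2
    -- derivative of s ↦ y²/(4αs)
    have hq : HasDerivAt (fun s : ℝ => y ^ 2 / (4 * α * s))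
        (y ^ 2 / (4 * α) * -(x ^ 2)⁻¹) x := by
      have h0 := (hasDerivAt_inv hx.ne').const_mul (y ^ 2 / (4 * α))
      have : (fun s : ℝ => y ^ 2 / (4 * α) * s⁻¹) = fun s => y ^ 2 / (4 * α * s) := by
        funext s
        rw [div_mul_eq_div_div]
        ring
      rwa [this] at h0
    have hexp : HasDerivAt (fun s : ℝ => Real.exp (y ^ 2 / (4 * α * s)))
        (Real.exp (y ^ 2 / (4 * α * x)) * (y ^ 2 / (4 * α) * -(x ^ 2)⁻¹)) x :=
      (Real.hasDerivAt_exp _).comp x hq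
    have hg : HasDerivAt (fun s => ε * (y * erfi (y / Real.sqrt (4 * α * s))
        - Real.sqrt (α * s) * Real.exp (y ^ 2 / (4 * α * s))))
        (ε * (y * (Real.exp (y ^ 2 / (4 * α * x)) * (y * -(1 / (2 * c) * (4 * α) / c ^ 2)))
          - (1 / (2 * Real.sqrt (α * x)) * α * Real.exp (y ^ 2 / (4 * α * x))
             + Real.sqrt (α * x) * (Real.exp (y ^ 2 / (4 * α * x)) * (y ^ 2 / (4 * α) * -(x ^ 2)⁻¹))))) x :=
      ((he1.const_mul y).sub (hu.mul hexp)).const_mul ε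
    have heq : (fun s => phi ε α s y) =ᶠ[nhds x]
        (fun s => ε * (y * erfi (y / Real.sqrt (4 * α * s))
          - Real.sqrt (α * s) * Real.exp (y ^ 2 / (4 * α * s)))) := by
      filter_upwards [eventually_gt_nhds hx] with s hs'
      exact phi_eq ε α s y hα hs'
    have hg' := hg.congr_of_eventuallyEq heq
    refine hg'.congr_deriv (Eq.symm ?_)
    have hsab : Real.sqrt (α * x) = a * b := Real.sqrt_mul hα.le x
    have hcab : c = 2 * (a * b) := by rw [hs, hsab]
    rw [hsab, hcab, show α = a ^ 2 from ha2.symm, show x = b ^ 2 from hb2.symm]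
    field_simp
    ring
  refine ⟨hi, hii, hiii, ?_⟩
  have hsab : Real.sqrt (α * x) = Real.sqrt α * Real.sqrt x := Real.sqrt_mul hα.le x
  have hapos : 0 < Real.sqrt α := Real.sqrt_pos.2 hα
  have hbpos : 0 < Real.sqrt x := Real.sqrt_pos.2 hx
  have ha2 : Real.sqrt α ^ 2 = α := Real.sq_sqrt hα.le
  rw [hsab, show α = Real.sqrt α ^ 2 from ha2.symm]
  field_simp
  rw [Real.sqrt_sq hapos.le, show Real.sqrt α ^ 2 * 4 * x = 4 * α * x by rw [ha2]; ring]
  ring
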